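/- The ω-language L = Σ*(a + Σa)^ω over Σ = {a,b} — equivalently, the set of ω-words satisfying the LTL formula FG(a ∨ Xa), i.e., eventually at every position either the current or next letter is a — has a trivial right congruence (one equivalence class), and hence cannot be recognized by any one-state deterministic Muller automaton even though |∼_L| = 1; in particular, the rightcon automaton of L is not isomorphic to any ω-automaton recognizing L with a Muller condition. -/

import Mathlib

namespace OmegaRC

variable {σ : Type*} {Q : Type*}

/-- Concatenation of a finite word with an ω-word. -/
def wcat (x : List σ) (w : ℕ → σ) : ℕ → σ :=
  fun n => if h : n < x.length then x.get ⟨n, h⟩ else w (n - x.length)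

/-- Canonical right congruence of an ω-language: `x ∼_L y`. -/
def RC (L : Set (ℕ → σ)) (x y : List σ) : Prop :=
  ∀ w : ℕ → σ, wcat x w ∈ L ↔ wcat y w ∈ L

/-- The periodic ω-word `v^ω` (for nonempty `v`). -/
def wrep [Inhabited σ] (v : List σ) : ℕ → σ :=
  fun n => v.getD (n % v.length) default

/-- Finite power `v^n` of a finite word. -/
def wpow (v : List σ) (n : ℕ) : List σ := (List.replicate n v).flatten

/-- The finite segment `w[i..j)` of an ω-word. -/
def segment (w : ℕ → σ) (i j : ℕ) : List σ :=
  (List.range (j - i)).map (fun k => w (i + k))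

/-- `R^ω`: ω-words that are infinite concatenations of (nonempty) words of `R`. -/
def omegaPow (R : Set (List σ)) : Set (ℕ → σ) :=
  { w | ∃ f : ℕ → ℕ, f 0 = 0 ∧ StrictMono f ∧ ∀ i, segment w (f i) (f (i + 1)) ∈ R }

/-- A complete deterministic transition structure. -/
structure DetAut (σ : Type*) (Q : Type*) where
  init : Q
  step : Q → σ → Q

/-- Extended transition function on finite words. -/
def DetAut.runFin (A : DetAut σ Q) (q : Q) (x : List σ) : Q := x.foldl A.step q

/-- The run of a deterministic automaton on an ω-word. -/
def DetAut.run (A : DetAut σ Q) (w : ℕ → σ) : ℕ → Q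
  | 0 => A.init
  | n + 1 => A.step (A.run w n) (w n)

/-- The set of states occurring infinitely often in a run. -/
def infSet (r : ℕ → Q) : Set Q := { q | ∀ n, ∃ m, n ≤ m ∧ r m = q }

/-- Muller acceptance. -/
def MullerAcc (A : DetAut σ Q) (acc : Set (Set Q)) (w : ℕ → σ) : Prop :=
  infSet (A.run w) ∈ acc

/-- Büchi acceptance. -/
def BuchiAcc (A : DetAut σ Q) (F : Set Q) (w : ℕ → σ) : Prop :=
  ∀ n, ∃ m, n ≤ m ∧ A.run w m ∈ F

/-- co-Büchi acceptance. -/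
def CoBuchiAcc (A : DetAut σ Q) (F : Set Q) (w : ℕ → σ) : Prop :=
  ∃ n, ∀ m, n ≤ m → A.run w m ∉ F

/-- Colors occurring infinitely often in a run. -/
def infColors (κ : Q → ℕ) (r : ℕ → Q) : Set ℕ := { c | ∀ n, ∃ m, n ≤ m ∧ κ (r m) = c }

/-- Parity (min-odd) acceptance. -/
def ParityAcc (A : DetAut σ Q) (κ : Q → ℕ) (w : ℕ → σ) : Prop :=
  ∃ c ∈ infColors κ (A.run w), (∀ c' ∈ infColors κ (A.run w), c ≤ c') ∧ Odd c

/-- `S` is strongly connected. -/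
def IsSCC (A : DetAut σ Q) (S : Set Q) : Prop :=
  ∀ s1 ∈ S, ∀ s2 ∈ S, ∃ x : List σ, x ≠ [] ∧ A.runFin s1 x = s2

/-- Transitions taken infinitely often in the run on `w`. -/
def infTrans (A : DetAut σ Q) (w : ℕ → σ) : Set (Q × σ × Q) :=
  { t | ∀ n, ∃ m, n ≤ m ∧ (A.run w m, w m, A.run w (m + 1)) = t }

/-- Transition-table (transition-based Muller) acceptance. -/
def TransAcc (A : DetAut σ Q) (acc : Set (Set (Q × σ × Q))) (w : ℕ → σ) : Prop :=
  infTrans A w ∈ acc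

/-- Non-counting ω-language. -/
def NonCounting (L : Set (ℕ → σ)) : Prop :=
  ∃ n₀ : ℕ, ∀ n > n₀, ∀ u v : List σ, ∀ w : ℕ → σ,
    (wcat (u ++ wpow v n) w ∈ L ↔ wcat (u ++ wpow v (n + 1)) w ∈ L)

/-- `L` is respective of its right congruence. -/
def Respective [Inhabited σ] (L : Set (ℕ → σ)) : Prop :=
  ∃ n₀ : ℕ, ∀ n > n₀, ∀ x u : List σ, u ≠ [] →
    wcat x (wrep u) ∈ L → RC L (x ++ wpow u n) (x ++ wpow u (n + 1))


lemma wcat_ge {σ : Type*} (x : List σ) (w : ℕ → σ) (n : ℕ) (h : x.length ≤ n) :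
    wcat x w n = w (n - x.length) := by
  simp [wcat]; omega

/-- `FG(a ∨ Xa)` has a trivial right congruence, yet no one-state DMA
recognizes it. -/
theorem fg_a_or_xa_trivial_rc_not_one_state_dma :
    let L : Set (ℕ → Bool) := { w | ∃ n, ∀ i ≥ n, w i = true ∨ w (i + 1) = true }
    (∀ x y : List Bool, RC L x y) ∧
    (∀ (Q : Type) (_ : Unique Q) (A : DetAut Bool Q) (acc : Set (Set Q)),
      ¬ (∀ w : ℕ → Bool, MullerAcc A acc w ↔ w ∈ L)) := by
  intro L
  constructor
  · have key : ∀ (x : List Bool) (w : ℕ → Bool), wcat x w ∈ L ↔ w ∈ L := by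
      intro x w
      constructor
      · rintro ⟨n, hn⟩
        refine ⟨n, fun i hi => ?_⟩
        have h1 := hn (i + x.length) (le_trans hi (Nat.le_add_right _ _))
        rw [wcat_ge x w (i + x.length) (Nat.le_add_left _ _),
            show i + x.length + 1 = (i+1) + x.length by omega,
            wcat_ge x w ((i+1) + x.length) (Nat.le_add_left _ _),
            Nat.add_sub_cancel, Nat.add_sub_cancel] at h1
        exact h1
      · rintro ⟨n, hn⟩
        refine ⟨n + x.length, fun i hi => ?_⟩
        rw [wcat_ge x w i (by omega), wcat_ge x w (i+1) (by omega)]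
        have h1 := hn (i - x.length) (by omega)
        rwa [show i + 1 - x.length = i - x.length + 1 by omega]
    intro x y w
    rw [key, key]
  · intro Q hQ A acc h
    have hinf : ∀ r : ℕ → Q, infSet r = Set.univ := by
      intro r; ext q
      simp only [infSet, Set.mem_setOf_eq, Set.mem_univ, iff_true]
      exact fun n => ⟨n, le_refl n, Subsingleton.elim _ _⟩
    have ht := (h (fun _ => true)).2 ⟨0, fun i _ => Or.inl rfl⟩
    have hf := (h (fun _ => false)).1 (by
      unfold MullerAcc; rw [hinf]; unfold MullerAcc at ht; rw [hinf] at ht; exact ht)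
    obtain ⟨n, hn⟩ := hf
    rcases hn n (le_refl n) with h' | h' <;> simp at h'


end OmegaRC
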